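/- Let μ ∈ ℝ, μ ≠ 0, Q = diag(-1,1,...,1), and q ∈ ℂ^{N+2} with qᵀq = 0 and qᵀQq ≠ 0. Set P = Qqqᵀ/(qᵀQq) and suppose P* = QPQ (complex conjugate entrywise). Define M(λ) = 1 + (2iμ/(λ - iμ)) P - (2iμ/(λ + iμ)) QPQ for λ ∈ ℂ \ {iμ, -iμ}. Then M(λ) M(λ)ᵀ = 1 for all such λ, and M(λ) = Q M(-λ) Q⁻¹, and M(λ*)* = M(λ). -/

import Mathlib

open Matrix

noncomputable section

lemma vmv_mul_vmv {n : Type*} [Fintype n] (a b c d : n → ℂ) :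
    vecMulVec a b * vecMulVec c d = (b ⬝ᵥ c) • vecMulVec a d := by
  ext i j
  simp only [mul_apply, vecMulVec_apply, Matrix.smul_apply, smul_eq_mul, dotProduct, Finset.sum_mul]
  exact Finset.sum_congr rfl fun k _ => by ring

lemma mat_mul_vmv {n : Type*} [Fintype n] (A : Matrix n n ℂ) (a b : n → ℂ) :
    A * vecMulVec a b = vecMulVec (A *ᵥ a) b := by
  ext i j
  simp only [mul_apply, vecMulVec_apply, mulVec, dotProduct, Finset.sum_mul]
  exact Finset.sum_congr rfl fun k _ => by ring

lemma vmv_mul_mat {n : Type*} [Fintype n] (A : Matrix n n ℂ) (a b : n → ℂ) :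
    vecMulVec a b * A = vecMulVec a (Aᵀ *ᵥ b) := by
  ext i j
  simp only [mul_apply, vecMulVec_apply, mulVec, dotProduct, transpose_apply, Finset.mul_sum]
  exact Finset.sum_congr rfl fun k _ => by ring

lemma vmv_transpose {n : Type*} (a b : n → ℂ) :
    (vecMulVec a b)ᵀ = vecMulVec b a := by
  ext i j; simp [vecMulVec_apply, mul_comm]

lemma map_smul_conj {n : Type*} (z : ℂ) (A : Matrix n n ℂ) :
    (z • A).map (starRingEnd ℂ) = (starRingEnd ℂ) z • A.map (starRingEnd ℂ) := by
  ext i j; simp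

/-- the Darboux matrix M(λ) = 1 + (2iμ/(λ−iμ))P − (2iμ/(λ+iμ))QPQ
satisfies M(λ)M(λ)ᵀ = 1, M(λ) = QM(−λ)Q⁻¹, and M(λ*)* = M(λ). -/
theorem stmt17 (N : ℕ) (μ : ℝ) (hμ : μ ≠ 0) (q : Fin (N + 2) → ℂ)
    (Q : Matrix (Fin (N + 2)) (Fin (N + 2)) ℂ)
    (hQ : Q = Matrix.diagonal (fun i => if i = 0 then -1 else 1))
    (hiso : ∑ i, q i * q i = 0)
    (hden : ∑ i, q i * (Q.mulVec q) i ≠ 0)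
    (P : Matrix (Fin (N + 2)) (Fin (N + 2)) ℂ)
    (hP : P = (∑ i, q i * (Q.mulVec q) i)⁻¹ • Matrix.vecMulVec (Q.mulVec q) q)
    (hreal : P.map (starRingEnd ℂ) = Q * P * Q)
    (M : ℂ → Matrix (Fin (N + 2)) (Fin (N + 2)) ℂ)
    (hM : ∀ l : ℂ, M l = 1 + (2 * (μ : ℂ) * Complex.I / (l - Complex.I * μ)) • P -
      (2 * (μ : ℂ) * Complex.I / (l + Complex.I * μ)) • (Q * P * Q)) :
    ∀ l : ℂ, l ≠ Complex.I * μ → l ≠ -(Complex.I * μ) →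
      M l * (M l)ᵀ = 1 ∧
      M l = Q * M (-l) * Q⁻¹ ∧
      (M ((starRingEnd ℂ) l)).map (starRingEnd ℂ) = M l := by
  have hQQ : Q * Q = 1 := by
    rw [hQ, diagonal_mul_diagonal]
    convert Matrix.diagonal_one
    rename_i i
    by_cases h : i = 0 <;> simp [h]
  have hQT : Qᵀ = Q := by rw [hQ, diagonal_transpose]
  set d : ℂ := ∑ i, q i * (Q.mulVec q) i with hd
  have hdot : q ⬝ᵥ (Q *ᵥ q) = d := rfl
  have hqq : q ⬝ᵥ q = 0 := hiso
  have hQQq : Q *ᵥ (Q *ᵥ q) = q := by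
    rw [Matrix.mulVec_mulVec, hQQ, Matrix.one_mulVec]
  have hQqQq : (Q *ᵥ q) ⬝ᵥ (Q *ᵥ q) = 0 := by
    rw [Matrix.dotProduct_mulVec, ← Matrix.mulVec_transpose, hQT, hQQq, hqq]
  have hPT : Pᵀ = Q * P * Q := by
    rw [hP, transpose_smul, vmv_transpose, Matrix.mul_smul, Matrix.smul_mul,
      mat_mul_vmv, vmv_mul_mat, hQQq, hQT]
  have hPT' : P = Q * Pᵀ * Q := by
    rw [hPT]
    calc P = (Q*Q) * P * (Q*Q) := by rw [hQQ]; simp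
    _ = Q * (Q * P * Q) * Q := by noncomm_ring
  have hP2 : P * P = P := by
    rw [hP, Matrix.smul_mul, Matrix.mul_smul, vmv_mul_vmv, hdot, smul_smul, smul_smul]
    congr 1
    field_simp
  have hPPT : P * Pᵀ = 0 := by
    rw [hP, transpose_smul, vmv_transpose, Matrix.smul_mul, Matrix.mul_smul,
      vmv_mul_vmv, hqq, zero_smul, smul_zero, smul_zero]
  have hPTP : Pᵀ * P = 0 := by
    rw [hP, transpose_smul, vmv_transpose, Matrix.smul_mul, Matrix.mul_smul,
      vmv_mul_vmv, hQqQq, zero_smul, smul_zero, smul_zero]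
  have hPTPT : Pᵀ * Pᵀ = Pᵀ := by rw [← transpose_mul, hP2]
  intro l h1 h2
  have hm : l - Complex.I * μ ≠ 0 := sub_ne_zero.mpr h1
  have hp : l + Complex.I * μ ≠ 0 := by
    intro h; exact h2 (by linear_combination h)
  set a : ℂ := 2 * (μ : ℂ) * Complex.I / (l - Complex.I * μ) with ha
  set b : ℂ := 2 * (μ : ℂ) * Complex.I / (l + Complex.I * μ) with hb
  have hab : a - b - a * b = 0 := by
    rw [ha, hb, div_sub_div _ _ hm hp, div_mul_div_comm, div_sub_div_same, div_eq_zero_iff]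
    left; ring
  have hMl : M l = 1 + a • P - b • Pᵀ := by rw [hM l, ← hPT]
  refine ⟨?_, ?_, ?_⟩
  · have key : M l * (M l)ᵀ = 1 + (a - b - a*b) • P + (a - b - a*b) • Pᵀ := by
      rw [hMl]
      simp only [transpose_add, transpose_sub, transpose_smul, transpose_one,
        transpose_transpose]
      simp only [add_mul, sub_mul, mul_add, mul_sub, Matrix.one_mul, Matrix.mul_one,
        Matrix.smul_mul, Matrix.mul_smul, hP2, hPPT, hPTP, hPTPT, smul_zero, smul_smul]
      module
    rw [key, hab]; simp
  · have hQinv : Q⁻¹ = Q := Matrix.inv_eq_right_inv hQQ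
    have hMnl : M (-l) = 1 + (-b) • P - (-a) • Pᵀ := by
      rw [hM (-l), ← hPT,
        show -l - Complex.I * μ = -(l + Complex.I * μ) by ring,
        show -l + Complex.I * μ = -(l - Complex.I * μ) by ring,
        div_neg, div_neg, ← ha, ← hb]
    rw [hMl, hMnl, hQinv]
    simp only [Matrix.mul_add, Matrix.mul_sub, Matrix.add_mul, Matrix.sub_mul,
      Matrix.mul_one, Matrix.one_mul, Matrix.mul_smul, Matrix.smul_mul, hQQ,
      ← Matrix.mul_assoc]
    rw [show Q * P * Q = Pᵀ from hPT.symm, show Q * Pᵀ * Q = P from hPT'.symm]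
    module
  · have hnum : (starRingEnd ℂ) (2 * (μ:ℂ) * Complex.I) = -(2 * (μ:ℂ) * Complex.I) := by
      rw [_root_.map_mul, _root_.map_mul, Complex.conj_I, Complex.conj_ofReal, map_ofNat]; ring
    have hden1 : (starRingEnd ℂ) l - Complex.I * μ =
        (starRingEnd ℂ) (l + Complex.I * μ) := by
      rw [_root_.map_add, _root_.map_mul, Complex.conj_I, Complex.conj_ofReal]; ring
    have hden2 : (starRingEnd ℂ) l + Complex.I * μ =
        (starRingEnd ℂ) (l - Complex.I * μ) := by
      rw [_root_.map_sub, _root_.map_mul, Complex.conj_I, Complex.conj_ofReal]; ring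
    have hc1 : (starRingEnd ℂ) (2 * (μ:ℂ) * Complex.I / ((starRingEnd ℂ) l - Complex.I * μ)) = -b := by
      rw [hden1, map_div₀, hnum, Complex.conj_conj, neg_div, hb]
    have hc2 : (starRingEnd ℂ) (2 * (μ:ℂ) * Complex.I / ((starRingEnd ℂ) l + Complex.I * μ)) = -a := by
      rw [hden2, map_div₀, hnum, Complex.conj_conj, neg_div, ha]
    have hPmap : P.map (starRingEnd ℂ) = Pᵀ := by rw [hreal, ← hPT]
    have hPTmap : Pᵀ.map (starRingEnd ℂ) = P := by
      rw [show Pᵀ.map (starRingEnd ℂ) = (P.map (starRingEnd ℂ))ᵀ from rfl, hPmap,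
        transpose_transpose]
    rw [hM ((starRingEnd ℂ) l), ← hPT,
      Matrix.map_sub _ (fun x y => map_sub (starRingEnd ℂ) x y),
      Matrix.map_add _ (fun x y => map_add (starRingEnd ℂ) x y),
      Matrix.map_one _ (map_zero _) (map_one _), map_smul_conj, map_smul_conj,
      hc1, hc2, hPmap, hPTmap, hMl]
    module
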